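/- Let ŵ_i, i ∈ [n], be random estimators with E[ŵ_i] = w_i. If I ⊆ [n] is a random subset where each item is included independently with probability p ∈ [0,1], independently of the estimators, then E_I[Var[ŵ_I]] = p·((1−p)·∑_{i∈[n]} Var[ŵ_i] + p·Var[ŵ_{[n]}]). -/

import Mathlib

open MeasureTheory ProbabilityTheory Finset

lemma integrable_mul_of_memL2 {Ω : Type*} [MeasurableSpace Ω] {μ : Measure Ω}
    {f g : Ω → ℝ} (hf : MemLp f 2 μ) (hg : MemLp g 2 μ) :
    Integrable (fun ω => f ω * g ω) μ := by
  have h : MemLp (f • g) 1 μ :=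
    hg.smul hf
  exact memLp_one_iff_integrable.mp h

lemma sum_powerset_weight {α : Type*} [DecidableEq α] (s : Finset α) (p q : ℝ) :
    ∑ t ∈ s.powerset, p ^ t.card * q ^ (s.card - t.card) = (p + q) ^ s.card := by
  have h := Finset.prod_add (fun _ => p) (fun _ => q) s
  simp only [Finset.prod_const] at h
  rw [h]
  exact Finset.sum_congr rfl fun t ht => by
    rw [Finset.card_sdiff_of_subset (Finset.mem_powerset.mp ht)]

lemma sum_filter_superset {α : Type*} [Fintype α] [DecidableEq α] (p : ℝ) (S : Finset α) :
    ∑ I ∈ (Finset.univ : Finset α).powerset.filter (fun I => S ⊆ I),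
      p ^ I.card * (1 - p) ^ (Fintype.card α - I.card) = p ^ S.card := by
  have hre : ∑ I ∈ (Finset.univ : Finset α).powerset.filter (fun I => S ⊆ I),
      p ^ I.card * (1 - p) ^ (Fintype.card α - I.card)
      = ∑ t ∈ Sᶜ.powerset,
          p ^ S.card * (p ^ t.card * (1 - p) ^ (Sᶜ.card - t.card)) := by
    refine Finset.sum_nbij' (fun I => I \ S) (fun t => t ∪ S) ?_ ?_ ?_ ?_ ?_
    · intro I hI
      simp only [Finset.mem_filter, Finset.mem_powerset] at hI
      simp only [Finset.mem_powerset]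
      intro x hx
      simp only [Finset.mem_sdiff] at hx
      simp [hx.2]
    · intro t ht
      simp only [Finset.mem_filter, Finset.mem_powerset]
      exact ⟨Finset.subset_univ _, Finset.subset_union_right⟩
    · intro I hI
      simp only [Finset.mem_filter, Finset.mem_powerset] at hI
      exact Finset.sdiff_union_of_subset hI.2
    · intro t ht
      simp only [Finset.mem_powerset] at ht
      ext x
      simp only [Finset.mem_sdiff, Finset.mem_union]
      constructor
      · rintro ⟨h | h, hn⟩
        · exact h
        · exact absurd h hn
      · intro hx
        exact ⟨Or.inl hx, fun hS => (Finset.mem_compl.mp (ht hx)) hS⟩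
    · intro I hI
      simp only [Finset.mem_filter, Finset.mem_powerset] at hI
      have hcard : (I \ S).card + S.card = I.card :=
        Finset.card_sdiff_add_card_eq_card hI.2
      have hSle : S.card ≤ I.card := Finset.card_le_card hI.2
      have hIle : I.card ≤ Fintype.card α := by
        simpa using Finset.card_le_card hI.1
      have hcompl : Sᶜ.card = Fintype.card α - S.card := Finset.card_compl S
      rw [← hcard, pow_add, hcompl]
      have : Fintype.card α - S.card - (I \ S).card
          = Fintype.card α - ((I \ S).card + S.card) := by omega
      rw [this]
      ring
  rw [hre, ← Finset.mul_sum, sum_powerset_weight]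
  simp

/-- Basic theorem, probability-p version: for arbitrary (possibly correlated)
unbiased estimators, the expected variance of `∑_{i∈I} what i` over a random
subset `I` including each item independently with probability `p` equals
`p((1−p)·ΣV + p·VΣ)`. -/
theorem avg_variance_subset_prob_p
    {Ω : Type*} [MeasurableSpace Ω] (μ : Measure Ω) [IsProbabilityMeasure μ]
    (n : ℕ) (p : ℝ) (hp0 : 0 ≤ p) (hp1 : p ≤ 1)
    (w : Fin n → ℝ) (what : Fin n → Ω → ℝ)
    (hL2 : ∀ i, MemLp (what i) 2 μ)
    (hunb : ∀ i, ∫ ω, what i ω ∂μ = w i) :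
    ∑ I ∈ (Finset.univ : Finset (Fin n)).powerset,
        p ^ I.card * (1 - p) ^ (n - I.card) *
          variance (fun ω => ∑ i ∈ I, what i ω) μ
      = p * ((1 - p) * ∑ i, variance (what i) μ
          + p * variance (fun ω => ∑ i, what i ω) μ) := by
  classical
  set g : Fin n → Ω → ℝ := fun i ω => what i ω - w i with hgdef
  have hgL2 : ∀ i, MemLp (g i) 2 μ := fun i => (hL2 i).sub (memLp_const _)
  have hint : ∀ i j, Integrable (fun ω => g i ω * g j ω) μ := fun i j =>
    integrable_mul_of_memL2 (hgL2 i) (hgL2 j)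
  set C : Fin n → Fin n → ℝ := fun i j => ∫ ω, g i ω * g j ω ∂μ with hCdef
  -- variance of a partial sum as a double sum of covariances
  have hvar : ∀ I : Finset (Fin n),
      variance (fun ω => ∑ i ∈ I, what i ω) μ = ∑ i ∈ I, ∑ j ∈ I, C i j := by
    intro I
    have hsum : MemLp (fun ω => ∑ i ∈ I, what i ω) 2 μ := by
      have h := memLp_finset_sum' I (fun i (_ : i ∈ I) => hL2 i)
      have he : (fun ω => ∑ i ∈ I, what i ω) = ∑ i ∈ I, what i := by
        funext ω
        simp
      rw [he]
      exact h
    have hmean : (∫ ω, (∑ i ∈ I, what i ω) ∂μ) = ∑ i ∈ I, w i := by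
      rw [integral_finset_sum I (fun i _ => (hL2 i).integrable one_le_two)]
      simp [hunb]
    rw [show variance (fun ω => ∑ i ∈ I, what i ω) μ = ∫ x, (((fun ω => ∑ i ∈ I, what i ω)
          - fun _ => ∫ ω, (∑ i ∈ I, what i ω) ∂μ) ^ (2 : ℕ) : Ω → ℝ) x ∂μ from
        variance_eq_integral hsum.1.aemeasurable]
    have heq : (((fun ω => ∑ i ∈ I, what i ω)
          - fun _ => ∫ ω, (∑ i ∈ I, what i ω) ∂μ) ^ (2 : ℕ))
        = fun ω => ∑ i ∈ I, ∑ j ∈ I, g i ω * g j ω := by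
      funext ω
      simp only [Pi.pow_apply, Pi.sub_apply, hmean]
      rw [← Finset.sum_sub_distrib, sq, Finset.sum_mul_sum]
    rw [heq, integral_finset_sum _ (fun i _ =>
      integrable_finset_sum _ (fun j _ => hint i j))]
    exact Finset.sum_congr rfl fun i _ => integral_finset_sum _ fun j _ => hint i j
  -- key combinatorial identity
  have key : ∀ i j : Fin n,
      (∑ I ∈ (Finset.univ : Finset (Fin n)).powerset.filter
          (fun I => i ∈ I ∧ j ∈ I),
        p ^ I.card * (1 - p) ^ (n - I.card))
      = p ^ ({i, j} : Finset (Fin n)).card := by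
    intro i j
    have h := sum_filter_superset p ({i, j} : Finset (Fin n))
    simp only [Fintype.card_fin] at h
    rw [← h]
    apply Finset.sum_congr _ fun _ _ => rfl
    apply Finset.filter_congr
    intro I _
    simp [Finset.insert_subset_iff]
  -- expand a constant times a double sum over I into a full double sum with ite
  have h1 : ∀ (I : Finset (Fin n)) (f : Fin n → ℝ),
      ∑ i ∈ I, f i = ∑ i, if i ∈ I then f i else 0 := by
    intro I f
    rw [Finset.sum_ite_mem, Finset.univ_inter]
  have expand : ∀ (I : Finset (Fin n)) (c : ℝ),
      c * ∑ i ∈ I, ∑ j ∈ I, C i j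
        = ∑ i, ∑ j, if i ∈ I ∧ j ∈ I then c * C i j else 0 := by
    intro I c
    rw [Finset.mul_sum]
    calc ∑ i ∈ I, c * ∑ j ∈ I, C i j
        = ∑ i ∈ I, ∑ j, (if j ∈ I then c * C i j else 0) := by
          refine Finset.sum_congr rfl fun i _ => ?_
          rw [Finset.mul_sum, h1 I (fun j => c * C i j)]
      _ = ∑ i, if i ∈ I then ∑ j, (if j ∈ I then c * C i j else 0) else 0 :=
          h1 I _
      _ = ∑ i, ∑ j, if i ∈ I ∧ j ∈ I then c * C i j else 0 := by
          refine Finset.sum_congr rfl fun i _ => ?_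
          by_cases h : i ∈ I <;> simp [h]
  -- compute the LHS
  have lhs_eq : ∑ I ∈ (Finset.univ : Finset (Fin n)).powerset,
        p ^ I.card * (1 - p) ^ (n - I.card) *
          variance (fun ω => ∑ i ∈ I, what i ω) μ
      = ∑ i, ∑ j, p ^ ({i, j} : Finset (Fin n)).card * C i j := by
    calc ∑ I ∈ (Finset.univ : Finset (Fin n)).powerset,
          p ^ I.card * (1 - p) ^ (n - I.card) *
            variance (fun ω => ∑ i ∈ I, what i ω) μ
        = ∑ I ∈ (Finset.univ : Finset (Fin n)).powerset, ∑ i, ∑ j,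
            (if i ∈ I ∧ j ∈ I then
              p ^ I.card * (1 - p) ^ (n - I.card) * C i j else 0) := by
          refine Finset.sum_congr rfl fun I _ => ?_
          rw [hvar I, expand]
      _ = ∑ i, ∑ j, ∑ I ∈ (Finset.univ : Finset (Fin n)).powerset,
            (if i ∈ I ∧ j ∈ I then
              p ^ I.card * (1 - p) ^ (n - I.card) * C i j else 0) := by
          rw [Finset.sum_comm]
          exact Finset.sum_congr rfl fun i _ => Finset.sum_comm
      _ = ∑ i, ∑ j, p ^ ({i, j} : Finset (Fin n)).card * C i j := by
          refine Finset.sum_congr rfl fun i _ => Finset.sum_congr rfl fun j _ => ?_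
          rw [← Finset.sum_filter, ← Finset.sum_mul, key i j]
  rw [lhs_eq]
  -- rewrite the RHS variances
  have hvu : variance (fun ω => ∑ i, what i ω) μ = ∑ i, ∑ j, C i j := hvar univ
  have hvi : ∀ i, variance (what i) μ = C i i := by
    intro i
    have : variance (what i) μ = variance (fun ω => ∑ j ∈ {i}, what j ω) μ := by
      congr 1
      funext ω
      simp
    rw [this, hvar {i}]
    simp
  rw [hvu]
  have hsumvi : ∑ i, variance (what i) μ = ∑ i, C i i :=
    Finset.sum_congr rfl fun i _ => hvi i
  rw [hsumvi]
  -- final algebra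
  have hcard : ∀ i j : Fin n,
      (p : ℝ) ^ ({i, j} : Finset (Fin n)).card
        = p ^ 2 + (if i = j then p - p ^ 2 else 0) := by
    intro i j
    by_cases h : i = j
    · subst h
      norm_num
    · rw [Finset.card_insert_of_notMem (by simp [h]), Finset.card_singleton]
      simp [h]
  calc ∑ i, ∑ j, p ^ ({i, j} : Finset (Fin n)).card * C i j
      = ∑ i, ∑ j, (p ^ 2 * C i j + (if i = j then (p - p ^ 2) * C i j else 0)) := by
        refine Finset.sum_congr rfl fun i _ => Finset.sum_congr rfl fun j _ => ?_
        rw [hcard i j]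
        split_ifs with h <;> ring
    _ = ∑ i, (∑ j, p ^ 2 * C i j + (p - p ^ 2) * C i i) := by
        refine Finset.sum_congr rfl fun i _ => ?_
        rw [Finset.sum_add_distrib, Finset.sum_ite_eq (Finset.univ) i
          (fun j => (p - p ^ 2) * C i j)]
        simp
    _ = p ^ 2 * (∑ i, ∑ j, C i j) + (p - p ^ 2) * ∑ i, C i i := by
        rw [Finset.sum_add_distrib, Finset.mul_sum, Finset.mul_sum]
        congr 1
        exact Finset.sum_congr rfl fun i _ => (Finset.mul_sum _ _ _).symm
    _ = p * ((1 - p) * ∑ i, C i i + p * ∑ i, ∑ j, C i j) := by ring
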